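/- With I the coideal spanned by μ_C(c,a)_{(1)}α(μ_C(c,a)_{(2)}) − c_{(1)}α(μ_C(c_{(2)},a)), B := C/I and π : C → B the quotient map, the action μ_C is left B-colinear: (π ⊗ C) ∘ Δ ∘ μ_C = (B ⊗ μ_C) ∘ ((π⊗C)∘Δ ⊗ A). Moreover, the image of (C ⊗ μ_C) ∘ (Δ ⊗ A) : C ⊗ A → C ⊗ C lies in the cotensor product C □_B C. -/

import Mathlib

open TensorProduct LinearMap Coalgebra

variable {k A C : Type*} [Field k] [Ring A] [Algebra k A]
  [AddCommGroup C] [Module k C] [Coalgebra k C]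

/-- `μ : C ⊗ A → C` is a unital, associative right `A`-action on `C`. -/
def IsAction (μ : C ⊗[k] A →ₗ[k] C) : Prop :=
  (∀ c : C, μ (c ⊗ₜ[k] (1 : A)) = c)
  ∧ (∀ (c : C) (a a' : A), μ (μ (c ⊗ₜ[k] a) ⊗ₜ[k] a') = μ (c ⊗ₜ[k] (a * a')))

/-- Action by a fixed element `a ∈ A`: `c ↦ μ(c ⊗ a)`. -/
noncomputable def actBy (μ : C ⊗[k] A →ₗ[k] C) (a : A) : C →ₗ[k] C :=
  μ ∘ₗ (TensorProduct.mk k C A).flip a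

/-- The subspace `I` of Lemma 3.2: the span of all
`μ(c,a)₍₁₎ α(μ(c,a)₍₂₎) − c₍₁₎ α(μ(c₍₂₎,a))` for `a ∈ A`, `c ∈ C`, `α ∈ Hom(C,k)`. -/
noncomputable def coidealI (μ : C ⊗[k] A →ₗ[k] C) : Submodule k C :=
  Submodule.span k {x : C | ∃ (a : A) (c : C) (α : C →ₗ[k] k), x =
    TensorProduct.rid k C (α.lTensor C (comul (R := k) (μ (c ⊗ₜ[k] a))))
      - TensorProduct.rid k C ((α ∘ₗ actBy μ a).lTensor C (comul (R := k) c))}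

/-- `(π ⊗ C) ∘ Δ : C → B ⊗ C`, where `B = C / I` and `π` the quotient map. -/
noncomputable def coactL (μ : C ⊗[k] A →ₗ[k] C) :
    C →ₗ[k] (C ⧸ coidealI μ) ⊗[k] C :=
  (coidealI μ).mkQ.rTensor C ∘ₗ comul (R := k)

/-- `(C ⊗ π) ∘ Δ : C → C ⊗ B`. -/
noncomputable def coactR (μ : C ⊗[k] A →ₗ[k] C) :
    C →ₗ[k] C ⊗[k] (C ⧸ coidealI μ) :=
  (coidealI μ).mkQ.lTensor C ∘ₗ comul (R := k)

/-- The coaction-equalising map `C ⊗ C → C ⊗ B ⊗ C` whose kernel is the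
cotensor product `C □_B C`. -/
noncomputable def cotensorEq (μ : C ⊗[k] A →ₗ[k] C) :
    C ⊗[k] C →ₗ[k] C ⊗[k] ((C ⧸ coidealI μ) ⊗[k] C) :=
  ((TensorProduct.assoc k C (C ⧸ coidealI μ) C).toLinearMap ∘ₗ (coactR μ).rTensor C)
    - (coactL μ).lTensor C

/-- The cotensor product `C □_B C ⊆ C ⊗ C`. -/
noncomputable def cotensor (μ : C ⊗[k] A →ₗ[k] C) : Submodule k (C ⊗[k] C) :=
  LinearMap.ker (cotensorEq μ)

/-- The canonical map `cocan = (C ⊗ μ) ∘ (Δ ⊗ A) : C ⊗ A → C ⊗ C`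
(taking values in `C □_B C`). -/
noncomputable def cocanF (μ : C ⊗[k] A →ₗ[k] C) : C ⊗[k] A →ₗ[k] C ⊗[k] C :=
  μ.lTensor C ∘ₗ (TensorProduct.assoc k C C A).toLinearMap
    ∘ₗ (comul (R := k) (A := C)).rTensor A

/-- `σ` is an inverse of `cocan` regarded as a map onto `C □_B C`, i.e. the
coextension `C ↠ B` is `A`-Galois. -/
def IsCocanInverse (μ : C ⊗[k] A →ₗ[k] C) (σ : C ⊗[k] C →ₗ[k] C ⊗[k] A) : Prop :=
  (LinearMap.range (cocanF μ) ≤ cotensor μ)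
  ∧ (σ ∘ₗ cocanF μ = LinearMap.id)
  ∧ (∀ x ∈ cotensor μ, cocanF μ (σ x) = x)

/-- The cotranslation map `τ̌ = (ε ⊗ A) ∘ cocan⁻¹ : C □_B C → A`, expressed via a
linear extension `σ` of `cocan⁻¹`. -/
noncomputable def cotrans (σ : C ⊗[k] C →ₗ[k] C ⊗[k] A) : C ⊗[k] C →ₗ[k] A :=
  (TensorProduct.lid k A).toLinearMap ∘ₗ (counit (R := k) (A := C)).rTensor A ∘ₗ σ

/-- Over a field, if all right contractions of `t : M ⊗ C` by functionals on `C`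
vanish, then `t = 0`. -/
lemma sep_aux {M : Type*} [AddCommGroup M] [Module k M] (t : M ⊗[k] C)
    (h : ∀ α : C →ₗ[k] k, TensorProduct.rid k M (α.lTensor M t) = 0) : t = 0 := by
  classical
  let b := Module.Basis.ofVectorSpace k C
  apply (LinearEquiv.lTensor M b.repr).injective
  rw [map_zero]
  apply (TensorProduct.finsuppScalarRight k k M _).injective
  rw [map_zero]
  ext i
  rw [TensorProduct.finsuppScalarRight_apply]
  have h1 : (Finsupp.lapply (M := k) (R := k) i).lTensor M
      ((LinearEquiv.lTensor M b.repr) t)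
      = ((Finsupp.lapply (M := k) (R := k) i) ∘ₗ b.repr.toLinearMap).lTensor M t := by
    rw [LinearMap.lTensor_comp]
    rfl
  rw [h1, AlgebraTensorModule.rid_eq_rid, h]
  simp

/-- If all right contractions of `d : C ⊗ C` land in `N`, then `π ⊗ id` kills `d`. -/
lemma mkQ_rTensor_eq_zero (N : Submodule k C) (d : C ⊗[k] C)
    (h : ∀ α : C →ₗ[k] k, TensorProduct.rid k C (α.lTensor C d) ∈ N) :
    N.mkQ.rTensor C d = 0 := by
  apply sep_aux
  intro α
  have h1 : α.lTensor (C ⧸ N) (N.mkQ.rTensor C d) = N.mkQ.rTensor k (α.lTensor C d) := by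
    rw [← LinearMap.comp_apply, ← LinearMap.comp_apply,
      LinearMap.lTensor_comp_rTensor, LinearMap.rTensor_comp_lTensor]
  rw [h1]
  have h2 : ∀ x : C ⊗[k] k, TensorProduct.rid k (C ⧸ N) (N.mkQ.rTensor k x)
      = N.mkQ (TensorProduct.rid k C x) := by
    intro x
    induction x using TensorProduct.induction_on with
    | zero => simp
    | tmul c s => simp
    | add x y hx hy => simp [hx, hy]
  rw [h2]
  simpa [Submodule.Quotient.mk_eq_zero] using h α

lemma lTensor_assoc_tmul {M : Type*} [AddCommGroup M] [Module k M]
    (μ : C ⊗[k] A →ₗ[k] C) (a : A) (y : M ⊗[k] C) :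
    μ.lTensor M ((TensorProduct.assoc k M C A) (y ⊗ₜ[k] a))
      = (actBy μ a).lTensor M y := by
  induction y using TensorProduct.induction_on with
  | zero => simp
  | tmul m c => simp [actBy]
  | add x y hx hy =>
      rw [TensorProduct.add_tmul, map_add, map_add, map_add, hx, hy]

/-- Pointwise left `B`-colinearity of the action. -/
lemma colinear_pt (μ : C ⊗[k] A →ₗ[k] C) (c : C) (a : A) :
    coactL μ (μ (c ⊗ₜ[k] a))
      = (actBy μ a).lTensor (C ⧸ coidealI μ) (coactL μ c) := by
  have hd : (coidealI μ).mkQ.rTensor C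
      (comul (R := k) (μ (c ⊗ₜ[k] a)) - (actBy μ a).lTensor C (comul (R := k) c)) = 0 := by
    apply mkQ_rTensor_eq_zero
    intro α
    apply Submodule.subset_span
    refine ⟨a, c, α, ?_⟩
    rw [map_sub, map_sub, ← LinearMap.lTensor_comp_apply]
  rw [map_sub, sub_eq_zero] at hd
  have hcomm : (actBy μ a).lTensor (C ⧸ coidealI μ) ∘ₗ (coidealI μ).mkQ.rTensor C
      = (coidealI μ).mkQ.rTensor C ∘ₗ (actBy μ a).lTensor C := by
    rw [LinearMap.lTensor_comp_rTensor, LinearMap.rTensor_comp_lTensor]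
  calc coactL μ (μ (c ⊗ₜ[k] a))
      = (coidealI μ).mkQ.rTensor C (comul (R := k) (μ (c ⊗ₜ[k] a))) := rfl
    _ = (coidealI μ).mkQ.rTensor C ((actBy μ a).lTensor C (comul (R := k) c)) := hd
    _ = ((coidealI μ).mkQ.rTensor C ∘ₗ (actBy μ a).lTensor C) (comul (R := k) c) := rfl
    _ = ((actBy μ a).lTensor (C ⧸ coidealI μ) ∘ₗ (coidealI μ).mkQ.rTensor C)
          (comul (R := k) c) := by rw [hcomm]
    _ = (actBy μ a).lTensor (C ⧸ coidealI μ) (coactL μ c) := rfl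

lemma colinear_comp (μ : C ⊗[k] A →ₗ[k] C) (a : A) :
    coactL μ ∘ₗ actBy μ a
      = (actBy μ a).lTensor (C ⧸ coidealI μ) ∘ₗ coactL μ := by
  ext c
  have : actBy μ a c = μ (c ⊗ₜ[k] a) := rfl
  simp only [LinearMap.comp_apply, this]
  exact colinear_pt μ c a

set_option maxRecDepth 8000 in
lemma juggle (f : C →ₗ[k] C) (N : Submodule k C) :
    (TensorProduct.assoc k C (C ⧸ N) C).toLinearMap
        ∘ₗ (N.mkQ.lTensor C).rTensor C ∘ₗ f.lTensor (C ⊗[k] C)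
      = (f.lTensor (C ⧸ N)).lTensor C ∘ₗ (N.mkQ.rTensor C).lTensor C
        ∘ₗ (TensorProduct.assoc k C C C).toLinearMap := by
  apply TensorProduct.ext_threefold
  intro x y z
  simp only [LinearMap.comp_apply, LinearMap.lTensor_tmul, LinearMap.rTensor_tmul,
    LinearEquiv.coe_coe, TensorProduct.assoc_tmul]

/-- Lemma 3.3: the action `μ_C` is left `B`-colinear, where
`B = C/I`, and the image of `cocan = (C ⊗ μ_C) ∘ (Δ ⊗ A)` lies in the cotensor
product `C □_B C`. -/
theorem action_colinear_and_cocan_into_cotensor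
    (μ : C ⊗[k] A →ₗ[k] C) (hμ : IsAction μ) :
    (coactL μ ∘ₗ μ
      = μ.lTensor (C ⧸ coidealI μ)
        ∘ₗ (TensorProduct.assoc k (C ⧸ coidealI μ) C A).toLinearMap
        ∘ₗ (coactL μ).rTensor A)
    ∧ LinearMap.range (cocanF μ) ≤ cotensor μ := by
  constructor
  · apply TensorProduct.ext'
    intro c a
    have hR : (μ.lTensor (C ⧸ coidealI μ)
        ∘ₗ (TensorProduct.assoc k (C ⧸ coidealI μ) C A).toLinearMap
        ∘ₗ (coactL μ).rTensor A) (c ⊗ₜ[k] a)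
        = (actBy μ a).lTensor (C ⧸ coidealI μ) (coactL μ c) := by
      simp only [LinearMap.comp_apply, LinearMap.rTensor_tmul]
      exact lTensor_assoc_tmul μ a (coactL μ c)
    rw [LinearMap.comp_apply, hR]
    exact colinear_pt μ c a
  · rintro x ⟨y, rfl⟩
    suffices h : cotensorEq μ ∘ₗ cocanF μ = 0 by
      have h' := LinearMap.congr_fun h y
      simp only [LinearMap.comp_apply, LinearMap.zero_apply] at h'
      exact LinearMap.mem_ker.mpr h'
    apply TensorProduct.ext'
    intro c a
    have hc : cocanF μ (c ⊗ₜ[k] a) = (actBy μ a).lTensor C (comul (R := k) c) := by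
      simp only [cocanF, LinearMap.comp_apply, LinearMap.rTensor_tmul]
      exact lTensor_assoc_tmul μ a (comul (R := k) c)
    rw [LinearMap.comp_apply, hc]
    let f := actBy μ a
    let N := coidealI μ
    -- Term A
    have hA : (TensorProduct.assoc k C (C ⧸ N) C).toLinearMap
        ((coactR μ).rTensor C (f.lTensor C (comul (R := k) c)))
        = (f.lTensor (C ⧸ N)).lTensor C ((N.mkQ.rTensor C).lTensor C
            ((comul (R := k)).lTensor C (comul (R := k) c))) := by
      have e1 : (coactR μ).rTensor C ∘ₗ f.lTensor C
          = ((N.mkQ.lTensor C).rTensor C ∘ₗ f.lTensor (C ⊗[k] C))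
            ∘ₗ (comul (R := k)).rTensor C := by
        rw [show coactR μ = N.mkQ.lTensor C ∘ₗ comul (R := k) from rfl,
          LinearMap.rTensor_comp]
        rw [LinearMap.comp_assoc, LinearMap.comp_assoc]
        congr 1
        rw [LinearMap.lTensor_comp_rTensor, LinearMap.rTensor_comp_lTensor]
      have e1' : (coactR μ).rTensor C (f.lTensor C (comul (R := k) c))
          = (N.mkQ.lTensor C).rTensor C ((f.lTensor (C ⊗[k] C))
              ((comul (R := k)).rTensor C (comul (R := k) c))) := by
        simpa only [LinearMap.comp_apply] using
          LinearMap.congr_fun e1 (comul (R := k) c)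
      have e2 := LinearMap.congr_fun (juggle f N)
        ((comul (R := k)).rTensor C (comul (R := k) c))
      simp only [LinearMap.comp_apply, LinearEquiv.coe_coe] at e2
      rw [e1']
      rw [show (TensorProduct.assoc k C (C ⧸ N) C).toLinearMap
            ((N.mkQ.lTensor C).rTensor C ((f.lTensor (C ⊗[k] C))
              ((comul (R := k)).rTensor C (comul (R := k) c))))
          = (TensorProduct.assoc k C (C ⧸ N) C)
            ((N.mkQ.lTensor C).rTensor C ((f.lTensor (C ⊗[k] C))
              ((comul (R := k)).rTensor C (comul (R := k) c)))) from rfl, e2]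
      rw [show (TensorProduct.assoc k C C C)
            ((comul (R := k)).rTensor C (comul (R := k) c))
          = (comul (R := k)).lTensor C (comul (R := k) c) from
        Coalgebra.coassoc_apply c]
    -- Term B
    have hB : (coactL μ).lTensor C (f.lTensor C (comul (R := k) c))
        = (f.lTensor (C ⧸ N)).lTensor C ((N.mkQ.rTensor C).lTensor C
            ((comul (R := k)).lTensor C (comul (R := k) c))) := by
      have e3 : (coactL μ) ∘ₗ f = (f.lTensor (C ⧸ N)) ∘ₗ (N.mkQ.rTensor C)
          ∘ₗ comul (R := k) := by
        rw [show f = actBy μ a from rfl, colinear_comp μ a]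
        rfl
      rw [← LinearMap.lTensor_comp_apply, e3, LinearMap.lTensor_comp,
        LinearMap.lTensor_comp, LinearMap.comp_apply, LinearMap.comp_apply]
    simp only [cotensorEq, LinearMap.sub_apply, LinearMap.comp_apply,
      LinearEquiv.coe_coe, LinearMap.zero_apply]
    rw [sub_eq_zero, hB]
    exact hA
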